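/- Let d ≥ 2 and let a, b ∈ EuclideanSpace ℝ (Fin d) with ‖a‖ = 1 and ‖b‖ = 1. Then (1 + ⟪a,b⟫)/2 is the greatest element of the set { ⟪a,x⟫ * ⟪b,x⟫ : x ∈ EuclideanSpace ℝ (Fin d), ‖x‖ = 1 }; that is, ⟪a,x⟫⟪b,x⟫ ≤ (1 + ⟪a,b⟫)/2 for every unit vector x, and the value (1 + ⟪a,b⟫)/2 is attained by some unit vector x. -/

import Mathlib

open RealInnerProductSpace

theorem stmt_0 (d : ℕ) (hd : 2 ≤ d) (a b : EuclideanSpace ℝ (Fin d))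
    (ha : ‖a‖ = 1) (hb : ‖b‖ = 1) :
    IsGreatest {y : ℝ | ∃ x : EuclideanSpace ℝ (Fin d), ‖x‖ = 1 ∧ y = ⟪a, x⟫ * ⟪b, x⟫}
      ((1 + ⟪a, b⟫) / 2) := by
  have hnorm : ‖a + b‖ ^ 2 = 2 + 2 * ⟪a, b⟫ := by
    rw [norm_add_sq_real, ha, hb]; ring
  constructor
  · -- membership: the value is attained
    by_cases hab : a + b = 0
    · -- b = -a, value is 0, pick orthogonal unit vector
      have hba : b = -a := by
        linear_combination (norm := abel) hab
      have hab' : ⟪a, b⟫ = -1 := by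
        rw [hba, inner_neg_right, real_inner_self_eq_norm_sq, ha]; norm_num
      have hane : a ≠ 0 := by
        intro h; rw [h, norm_zero] at ha; norm_num at ha
      have hfin : 0 < Module.finrank ℝ ((ℝ ∙ a)ᗮ : Submodule ℝ (EuclideanSpace ℝ (Fin d))) := by
        have h1 : Module.finrank ℝ ((ℝ ∙ a) : Submodule ℝ (EuclideanSpace ℝ (Fin d)))
            + Module.finrank ℝ ((ℝ ∙ a)ᗮ : Submodule ℝ (EuclideanSpace ℝ (Fin d)))
            = Module.finrank ℝ (EuclideanSpace ℝ (Fin d)) :=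
          Submodule.finrank_add_finrank_orthogonal _
        have h2 : Module.finrank ℝ ((ℝ ∙ a) : Submodule ℝ (EuclideanSpace ℝ (Fin d))) = 1 :=
          finrank_span_singleton hane
        have h3 : Module.finrank ℝ (EuclideanSpace ℝ (Fin d)) = d := by simp
        omega
      have : Nontrivial ((ℝ ∙ a)ᗮ : Submodule ℝ (EuclideanSpace ℝ (Fin d))) :=
        Module.finrank_pos_iff.mp hfin
      obtain ⟨w, hw⟩ := exists_ne (0 : ((ℝ ∙ a)ᗮ : Submodule ℝ (EuclideanSpace ℝ (Fin d))))
      have hvne : (w : EuclideanSpace ℝ (Fin d)) ≠ 0 := by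
        simpa [Submodule.coe_eq_zero] using hw
      have hvnorm : ‖(w : EuclideanSpace ℝ (Fin d))‖ ≠ 0 := by simpa using hvne
      refine ⟨‖(w : EuclideanSpace ℝ (Fin d))‖⁻¹ • (w : EuclideanSpace ℝ (Fin d)), ?_, ?_⟩
      · rw [norm_smul, norm_inv, norm_norm, inv_mul_cancel₀ hvnorm]
      · have hav : ⟪a, (w : EuclideanSpace ℝ (Fin d))⟫ = 0 := by
          have := (Submodule.mem_orthogonal _ _).mp w.2 a (Submodule.mem_span_singleton_self a)
          simpa [real_inner_comm] using this
        rw [real_inner_smul_right, hav, hab']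
        ring
    · -- x = (a+b)/‖a+b‖
      have hnne : ‖a + b‖ ≠ 0 := norm_ne_zero_iff.mpr hab
      have hpos : (0:ℝ) < 2 + 2 * ⟪a, b⟫ := by
        rw [← hnorm]; positivity
      refine ⟨‖a + b‖⁻¹ • (a + b), ?_, ?_⟩
      · rw [norm_smul, norm_inv, norm_norm, inv_mul_cancel₀ hnne]
      · have haab : ⟪a, a + b⟫ = 1 + ⟪a, b⟫ := by
          rw [inner_add_right, real_inner_self_eq_norm_sq, ha]; ring
        have hbab : ⟪b, a + b⟫ = 1 + ⟪a, b⟫ := by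
          rw [inner_add_right, real_inner_self_eq_norm_sq, hb, real_inner_comm b a]; ring
        rw [real_inner_smul_right, real_inner_smul_right, haab, hbab]
        set t : ℝ := ⟪a, b⟫ with ht
        have h1 : (1 : ℝ) + t ≠ 0 := by linarith
        have hn2 : ‖a + b‖ ^ 2 = 2 + 2 * t := hnorm
        rw [show ‖a + b‖⁻¹ * (1 + t) * (‖a + b‖⁻¹ * (1 + t))
            = (1 + t) ^ 2 / ‖a + b‖ ^ 2 by field_simp, hn2]
        field_simp
  · -- upper bound
    rintro y ⟨x, hx, rfl⟩
    have h1 : |⟪a + b, x⟫| ≤ ‖a + b‖ := by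
      have := abs_real_inner_le_norm (a + b) x
      rwa [hx, mul_one] at this
    have h2 : ⟪a + b, x⟫ ^ 2 ≤ 2 + 2 * ⟪a, b⟫ := by
      rw [← hnorm]
      calc ⟪a + b, x⟫ ^ 2 = |⟪a + b, x⟫| ^ 2 := (sq_abs _).symm
        _ ≤ ‖a + b‖ ^ 2 := by apply pow_le_pow_left₀ (abs_nonneg _) h1
    have h3 : ⟪a + b, x⟫ = ⟪a, x⟫ + ⟪b, x⟫ := inner_add_left _ _ _
    rw [h3] at h2
    nlinarith [sq_nonneg (⟪a, x⟫ - ⟪b, x⟫)]
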